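/- Let I, J ⊆ V be disjoint of sizes i and j. Then the paired function p_{I,J} has size exactly 1 if and only if either (min(i,j) = min(k,n−k) < max(i,j) ≤ max(k,n−k)) or (min(i,j) ≤ min(k,n−k) < max(i,j) = max(k,n−k)). -/
import Mathlib

open Finset

lemma choose_eq_one_iff' (N m : ℕ) : N.choose m = 1 ↔ m = 0 ∨ m = N := by
  constructor
  · intro h
    by_contra hc
    push_neg at hc
    obtain ⟨h0, hN⟩ := hc
    rcases lt_or_gt_of_ne hN with hlt | hgt
    · obtain ⟨n, rfl⟩ : ∃ n, N = n + 1 := ⟨N - 1, by omega⟩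
      obtain ⟨l, rfl⟩ : ∃ l, m = l + 1 := ⟨m - 1, by omega⟩
      rw [Nat.choose_succ_succ'] at h
      have h1 : 0 < n.choose l := Nat.choose_pos (by omega)
      have h2 : 0 < n.choose (l + 1) := Nat.choose_pos (by omega)
      omega
    · have := Nat.choose_eq_zero_of_lt hgt
      omega
  · rintro (rfl | rfl) <;> simp

lemma count_between {α : Type*} [Fintype α] [DecidableEq α] (I B : Finset α)
    (hIB : I ⊆ B) {k : ℕ} (hik : I.card ≤ k) :
    ((Finset.powersetCard k (Finset.univ : Finset α)).filter
      (fun K => I ⊆ K ∧ K ⊆ B)).card = (B.card - I.card).choose (k - I.card) := by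
  rw [← card_sdiff_of_subset hIB, ← card_powersetCard (k - I.card) (B \ I)]
  apply Finset.card_bij' (fun K _ => K \ I) (fun K _ => K ∪ I)
  · intro K hK
    simp only [mem_filter, mem_powersetCard_univ] at hK
    obtain ⟨hc, hIK, hKB⟩ := hK
    rw [mem_powersetCard]
    exact ⟨sdiff_subset_sdiff hKB le_rfl, by rw [card_sdiff_of_subset hIK, hc]⟩
  · intro K hK
    rw [mem_powersetCard] at hK
    obtain ⟨hKs, hc⟩ := hK
    have hdisj : Disjoint K I := sdiff_disjoint.mono_left hKs  -- K ⊆ B \ I, B\I disjoint I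
    simp only [mem_filter, mem_powersetCard_univ]
    refine ⟨?_, subset_union_right, union_subset (hKs.trans sdiff_subset) hIB⟩
    rw [card_union_of_disjoint hdisj, hc]
    omega
  · intro K hK
    simp only [mem_filter, mem_powersetCard_univ] at hK
    exact sdiff_union_of_subset hK.2.1
  · intro K hK
    rw [mem_powersetCard] at hK
    have hdisj : Disjoint K I := sdiff_disjoint.mono_left hK.1
    exact union_sdiff_cancel_right hdisj

theorem paired_size_one_iff {α : Type*} [Fintype α] [DecidableEq α] (n k i j : ℕ)
    (hn : Fintype.card α = n) (hk : k ≤ n)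
    (I J : Finset α) (hd : Disjoint I J) (hi : I.card = i) (hj : J.card = j) :
    (∑ K ∈ Finset.powersetCard k (Finset.univ : Finset α),
      ((if I ⊆ K ∧ K ⊆ Finset.univ \ J then (1 : ℝ) else 0) +
        (if J ⊆ K ∧ K ⊆ Finset.univ \ I then (1 : ℝ) else 0)) = 1) ↔
      ((min i j = min k (n - k) ∧ min k (n - k) < max i j ∧ max i j ≤ max k (n - k)) ∨
       (min i j ≤ min k (n - k) ∧ min k (n - k) < max i j ∧ max i j = max k (n - k))) := by
  have hij : i + j ≤ n := by
    have := card_le_univ (I ∪ J)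
    rw [card_union_of_disjoint hd, hi, hj, hn] at this
    omega
  have hIJc : I ⊆ Finset.univ \ J := subset_sdiff.mpr ⟨subset_univ I, hd⟩
  have hJIc : J ⊆ Finset.univ \ I := subset_sdiff.mpr ⟨subset_univ J, hd.symm⟩
  have hcardJc : (Finset.univ \ J).card = n - j := by
    rw [card_sdiff_of_subset (subset_univ J), card_univ, hn, hj]
  have hcardIc : (Finset.univ \ I).card = n - i := by
    rw [card_sdiff_of_subset (subset_univ I), card_univ, hn, hi]
  set N₁ := ((Finset.powersetCard k (Finset.univ : Finset α)).filter
      (fun K => I ⊆ K ∧ K ⊆ Finset.univ \ J)).card with hN₁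
  set N₂ := ((Finset.powersetCard k (Finset.univ : Finset α)).filter
      (fun K => J ⊆ K ∧ K ⊆ Finset.univ \ I)).card with hN₂
  have hsum : (∑ K ∈ Finset.powersetCard k (Finset.univ : Finset α),
      ((if I ⊆ K ∧ K ⊆ Finset.univ \ J then (1 : ℝ) else 0) +
        (if J ⊆ K ∧ K ⊆ Finset.univ \ I then (1 : ℝ) else 0))) = (N₁ : ℝ) + (N₂ : ℝ) := by
    rw [Finset.sum_add_distrib, Finset.sum_boole, Finset.sum_boole]
  rw [hsum]
  have hcast : ((N₁ : ℝ) + (N₂ : ℝ) = 1) ↔ N₁ + N₂ = 1 := by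
    rw [← Nat.cast_add, ← Nat.cast_one, Nat.cast_inj]
  rw [hcast]
  have hN1v : N₁ = if i ≤ k then (n - i - j).choose (k - i) else 0 := by
    split_ifs with h
    · rw [hN₁, count_between I _ hIJc (hi ▸ h), hcardJc, hi]
      congr 1
      omega
    · rw [hN₁, card_eq_zero, filter_eq_empty_iff]
      intro K hK
      rw [mem_powersetCard_univ] at hK
      rintro ⟨hIK, -⟩
      have := card_le_card hIK
      omega
  have hN2v : N₂ = if j ≤ k then (n - i - j).choose (k - j) else 0 := by
    split_ifs with h
    · rw [hN₂, count_between J _ hJIc (hj ▸ h), hcardIc, hj]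
    · rw [hN₂, card_eq_zero, filter_eq_empty_iff]
      intro K hK
      rw [mem_powersetCard_univ] at hK
      rintro ⟨hJK, -⟩
      have := card_le_card hJK
      omega
  rw [hN1v, hN2v]
  have h11 := choose_eq_one_iff' (n - i - j) (k - i)
  have h10 := Nat.choose_eq_zero_iff (n := n - i - j) (k := k - i)
  have h21 := choose_eq_one_iff' (n - i - j) (k - j)
  have h20 := Nat.choose_eq_zero_iff (n := n - i - j) (k := k - j)
  set c₁ := (n - i - j).choose (k - i)
  set c₂ := (n - i - j).choose (k - j)
  split_ifs <;> omega
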